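/- For every countable ordinal λ, the space [0,1]^λ_lex (the product [0,1]^λ endowed with the order topology of the lexicographic order) is a KLΣ(≤ω)-space. -/

import Mathlib

open TopologicalSpace

/-- A topological space `X` is a `KLΣ(≤ω)`-space if there exist a compact metrizable
space `M` and a compact-valued upper semicontinuous onto set-valued map `p : M → Set X`
all of whose values are metrizable. -/
def IsKLSigmaLeOmega (X : Type*) [TopologicalSpace X] : Prop :=
  ∃ (M : Type) (_ : TopologicalSpace M),
    CompactSpace M ∧ MetrizableSpace M ∧
    ∃ p : M → Set X,
      (⋃ z, p z) = Set.univ ∧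
      (∀ z, IsCompact (p z)) ∧
      (∀ U : Set X, IsOpen U → IsOpen {z | p z ⊆ U}) ∧
      ∀ z, MetrizableSpace (p z)

abbrev II : Type := ↥(Set.Icc (0 : ℝ) 1)

theorem factIcc : Fact ((0:ℝ) ≤ 1) := ⟨zero_le_one⟩

set_option linter.unusedSectionVars false

universe u

variable {ι : Type u} [LinearOrder ι] [WellFoundedLT ι]

noncomputable example : LinearOrder (Lex (ι → II)) := inferInstance

example (x y : ι → II) (h : toLex x < toLex y) :
    ∃ i, (∀ j, j < i → x j = y j) ∧ x i < y i := h

example (x y : ι → II) (i : ι) (h1 : ∀ j, j < i → x j = y j) (h2 : x i < y i) :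
    toLex x < toLex y := ⟨i, h1, h2⟩

noncomputable def lexSup (S : Set (ι → II)) : ι → II :=
  haveI := factIcc
  (wellFounded_lt (α := ι)).fix fun α rec =>
    sSup {v : II | ∃ x ∈ S, (∀ β (h : β < α), x β = rec β h) ∧ x α = v}

lemma lexSup_eq (S : Set (ι → II)) (α : ι) :
    haveI := factIcc
    lexSup S α = sSup {v : II | ∃ x ∈ S, (∀ β, β < α → x β = lexSup S β) ∧ x α = v} := by
  rw [lexSup, WellFounded.fix_eq]


lemma isLUB_lexSup (S : Set (ι → II)) : IsLUB (toLex '' S) (toLex (lexSup S)) := by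
  haveI := factIcc
  constructor
  · rintro _ ⟨x, hx, rfl⟩
    by_contra h
    rw [not_le] at h
    obtain ⟨γ, hag, hlt⟩ : ∃ i, (∀ j, j < i → lexSup S j = x j) ∧ lexSup S i < x i := h
    have hxA : x γ ∈ {v : II | ∃ y ∈ S, (∀ β, β < γ → y β = lexSup S β) ∧ y γ = v} :=
      ⟨x, hx, fun β hβ => (hag β hβ).symm, rfl⟩
    have := le_sSup hxA
    rw [← lexSup_eq] at this
    exact absurd this (not_le.mpr hlt)
  · rintro u hu
    by_contra h
    rw [not_le] at h
    obtain ⟨γ, hag, hlt⟩ : ∃ i, (∀ j, j < i → ofLex u j = lexSup S j) ∧ ofLex u i < lexSup S i := h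
    rw [lexSup_eq] at hlt
    obtain ⟨v, ⟨x, hx, hagx, rfl⟩, hv⟩ := lt_sSup_iff.mp hlt
    have hux : u < toLex x :=
      ⟨γ, fun j hj => (hag j hj).trans (hagx j hj).symm, hv⟩
    exact absurd (hu ⟨x, hx, rfl⟩) (not_le.mpr hux)

noncomputable def lexInf (S : Set (ι → II)) : ι → II :=
  haveI := factIcc
  (wellFounded_lt (α := ι)).fix fun α rec =>
    sInf {v : II | ∃ x ∈ S, (∀ β (h : β < α), x β = rec β h) ∧ x α = v}

lemma lexInf_eq (S : Set (ι → II)) (α : ι) :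
    haveI := factIcc
    lexInf S α = sInf {v : II | ∃ x ∈ S, (∀ β, β < α → x β = lexInf S β) ∧ x α = v} := by
  rw [lexInf, WellFounded.fix_eq]

lemma isGLB_lexInf (S : Set (ι → II)) : IsGLB (toLex '' S) (toLex (lexInf S)) := by
  haveI := factIcc
  constructor
  · rintro _ ⟨x, hx, rfl⟩
    by_contra h
    rw [not_le] at h
    obtain ⟨γ, hag, hlt⟩ : ∃ i, (∀ j, j < i → x j = lexInf S j) ∧ x i < lexInf S i := h
    have hxA : x γ ∈ {v : II | ∃ y ∈ S, (∀ β, β < γ → y β = lexInf S β) ∧ y γ = v} :=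
      ⟨x, hx, fun β hβ => hag β hβ, rfl⟩
    have := sInf_le hxA
    rw [← lexInf_eq] at this
    exact absurd this (not_le.mpr hlt)
  · rintro u hu
    by_contra h
    rw [not_le] at h
    obtain ⟨γ, hag, hlt⟩ : ∃ i, (∀ j, j < i → lexInf S j = ofLex u j) ∧ lexInf S i < ofLex u i := h
    rw [lexInf_eq] at hlt
    obtain ⟨v, ⟨x, hx, hagx, rfl⟩, hv⟩ := sInf_lt_iff.mp hlt
    have hux : toLex x < u :=
      ⟨γ, fun j hj => (hagx j hj).trans (hag j hj), hv⟩
    exact absurd (hu ⟨x, hx, rfl⟩) (not_le.mpr hux)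

noncomputable instance : CompleteLattice (Lex (ι → II)) :=
  { (inferInstance : Lattice (Lex (ι → II))),
    (inferInstance : BoundedOrder (Lex (ι → II))) with
    sSup := fun T => toLex (lexSup (ofLex '' T))
    isLUB_sSup := fun T => ⟨fun a ha => (isLUB_lexSup (ofLex '' T)).1 ⟨ofLex a, ⟨a, ha, rfl⟩, rfl⟩,
      fun a ha => (isLUB_lexSup (ofLex '' T)).2 (by
      rintro _ ⟨_, ⟨b, hb, rfl⟩, rfl⟩; exact ha hb)⟩
    sInf := fun T => toLex (lexInf (ofLex '' T))
    isGLB_sInf := fun T => ⟨fun a ha => (isGLB_lexInf (ofLex '' T)).1 ⟨ofLex a, ⟨a, ha, rfl⟩, rfl⟩,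
      fun a ha => (isGLB_lexInf (ofLex '' T)).2 (by
      rintro _ ⟨_, ⟨b, hb, rfl⟩, rfl⟩; exact ha hb)⟩ }

noncomputable instance : CompleteLinearOrder (Lex (ι → II)) :=
  { (inferInstance : CompleteLattice (Lex (ι → II))),
    (inferInstance : LinearOrder (Lex (ι → II))), LinearOrder.toBiheytingAlgebra (Lex (ι → II)) with }

/-- A countable compact Hausdorff space is metrizable. -/
theorem metrizable_of_countable_compact_t2 (Y : Type*) [TopologicalSpace Y] [Countable Y]
    [CompactSpace Y] [T2Space Y] : TopologicalSpace.MetrizableSpace Y := by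
  haveI : NormalSpace Y := inferInstance
  have key : ∀ q : {p : Y × Y // p.1 ≠ p.2}, ∃ f : C(Y, ℝ),
      f q.1.1 = 0 ∧ f q.1.2 = 1 := by
    intro q
    obtain ⟨f, h0, h1, -⟩ := exists_continuous_zero_one_of_isClosed
      (isClosed_singleton (x := q.1.1)) (isClosed_singleton (x := q.1.2))
      (Set.disjoint_singleton.mpr q.2)
    exact ⟨f, h0 rfl, h1 rfl⟩
  choose f h0 h1 using key
  let F : Y → ({p : Y × Y // p.1 ≠ p.2} → ℝ) := fun y q => f q y
  have hFc : Continuous F := continuous_pi fun q => (f q).continuous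
  have hFi : Function.Injective F := by
    intro x y hxy
    by_contra hne
    have h2 := congrFun hxy ⟨(x, y), hne⟩
    have h3 : F x ⟨(x, y), hne⟩ = 0 := h0 ⟨(x, y), hne⟩
    have h4 : F y ⟨(x, y), hne⟩ = 1 := h1 ⟨(x, y), hne⟩
    rw [h3, h4] at h2
    norm_num at h2
  exact (hFc.isClosedEmbedding hFi).isEmbedding.metrizableSpace

section Topology

local instance (priority := 5000) lexTop {κ : Type u} [LinearOrder κ] [WellFoundedLT κ] :
    TopologicalSpace (Lex (κ → II)) := Preorder.topology _

local instance : OrderTopology (Lex (ι → II)) := ⟨rfl⟩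

local instance : CompactSpace (Lex (ι → II)) :=
  ⟨by rw [← Set.Icc_bot_top]; exact isCompact_Icc⟩

example : T2Space (Lex (ι → II)) := inferInstance

example (lo hi : Lex (ι → II)) : IsOpen (Set.Ioo lo hi) := isOpen_Ioo

def one' : II := ⟨1, by norm_num⟩
def zero' : II := ⟨0, by norm_num⟩

lemma le_one' (a : II) : a ≤ one' := Subtype.coe_le_coe.mp a.2.2
lemma zero'_le (a : II) : zero' ≤ a := Subtype.coe_le_coe.mp a.2.1

/-- `x` truncated at `γ`: value `c` at `γ` and constant `t` above `γ`. -/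
def upd (x : ι → II) (γ : ι) (c t : II) : ι → II := fun β =>
  if β < γ then x β else if β = γ then c else t

lemma upd_lt_self {x : ι → II} {γ : ι} {c : II} (hc : c < x γ) (t : II) :
    toLex (upd x γ c t) < toLex x := by
  refine ⟨γ, fun j hj => ?_, ?_⟩
  · simp [upd, hj]
  · simpa [upd] using hc

lemma self_lt_upd {x : ι → II} {γ : ι} {c : II} (hc : x γ < c) (t : II) :
    toLex x < toLex (upd x γ c t) := by
  refine ⟨γ, fun j hj => ?_, ?_⟩
  · simp [upd, hj]
  · simpa [upd] using hc

lemma sep_up (z x : ι → II) (γ δ : ι) (h1 : z γ < x γ) (h2 : γ ≤ δ) (h3 : x δ < one') :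
    ∃ V : Set (ι → II), IsOpen V ∧ z ∈ V ∧ toLex x ∉ closure (toLex '' V) := by
  obtain ⟨c, hc1, hc2⟩ := exists_between h1
  obtain ⟨m, hm1, hm2⟩ := exists_between h3
  refine ⟨{y | y γ < c}, ?_, hc1, ?_⟩
  · have : {y : ι → II | y γ < c} = (fun y : ι → II => y γ) ⁻¹' Set.Iio c := rfl
    rw [this]
    exact (isOpen_Iio (a := c)).preimage (continuous_apply γ)
  · set lo := toLex (upd x γ c one') with hlo
    set hi := toLex (upd x δ m zero') with hhi
    have hxW : toLex x ∈ Set.Ioo lo hi := ⟨upd_lt_self hc2 _, self_lt_upd hm1 _⟩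
    have hsub : toLex '' {y | y γ < c} ⊆ (Set.Ioo lo hi)ᶜ := by
      rintro _ ⟨y, hy, rfl⟩ ⟨hl, hr⟩
      obtain ⟨i, hieq, hilt⟩ : ∃ i, (∀ j, j < i → upd x γ c one' j = y j) ∧
          upd x γ c one' i < y i := hl
      have hy' : y γ < c := hy
      rcases lt_trichotomy i γ with hi1 | heq | hi3
      · -- i < γ : y agrees with x below i, and x i < y i ; contradict y < hi
        rw [show upd x γ c one' i = x i by simp [upd, hi1]] at hilt
        obtain ⟨k, hkeq, hklt⟩ : ∃ k, (∀ j, j < k → y j = upd x δ m zero' j) ∧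
            y k < upd x δ m zero' k := hr
        rcases lt_trichotomy k i with hk1 | rfl | hk3
        · rw [show upd x δ m zero' k = x k by simp [upd, hk1.trans (hi1.trans_le h2)]] at hklt
          rw [← hieq k hk1] at hklt
          rw [show upd x γ c one' k = x k by simp [upd, hk1.trans hi1]] at hklt
          exact lt_irrefl _ hklt
        · rw [show upd x δ m zero' k = x k by simp [upd, hi1.trans_le h2]] at hklt
          exact absurd (hilt.trans hklt) (lt_irrefl _)
        · have := hkeq i hk3
          rw [show upd x δ m zero' i = x i by simp [upd, hi1.trans_le h2]] at this
          rw [this] at hilt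
          exact lt_irrefl _ hilt
      · -- i = γ
        rw [heq, show upd x γ c one' γ = c by simp [upd]] at hilt
        exact absurd (hilt.trans hy') (lt_irrefl _)
      · -- γ < i
        have h5 := hieq γ hi3
        rw [show upd x γ c one' γ = c by simp [upd]] at h5
        rw [← h5] at hy'
        exact lt_irrefl _ hy'
    exact fun hmem => (closure_minimal hsub isOpen_Ioo.isClosed_compl hmem) hxW

lemma sep_down (z x : ι → II) (γ δ : ι) (h1 : x γ < z γ) (h2 : γ ≤ δ) (h3 : zero' < x δ) :
    ∃ V : Set (ι → II), IsOpen V ∧ z ∈ V ∧ toLex x ∉ closure (toLex '' V) := by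
  obtain ⟨c, hc1, hc2⟩ := exists_between h1
  obtain ⟨m, hm1, hm2⟩ := exists_between h3
  refine ⟨{y | c < y γ}, ?_, hc2, ?_⟩
  · have : {y : ι → II | c < y γ} = (fun y : ι → II => y γ) ⁻¹' Set.Ioi c := rfl
    rw [this]
    exact (isOpen_Ioi (a := c)).preimage (continuous_apply γ)
  · set lo := toLex (upd x δ m one') with hlo
    set hi := toLex (upd x γ c zero') with hhi
    have hxW : toLex x ∈ Set.Ioo lo hi := ⟨upd_lt_self hm2 _, self_lt_upd hc1 _⟩
    have hsub : toLex '' {y | c < y γ} ⊆ (Set.Ioo lo hi)ᶜ := by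
      rintro _ ⟨y, hy, rfl⟩ ⟨hl, hr⟩
      obtain ⟨i, hieq, hilt⟩ : ∃ i, (∀ j, j < i → y j = upd x γ c zero' j) ∧
          y i < upd x γ c zero' i := hr
      have hy' : c < y γ := hy
      rcases lt_trichotomy i γ with hi1 | heq | hi3
      · rw [show upd x γ c zero' i = x i by simp [upd, hi1]] at hilt
        obtain ⟨k, hkeq, hklt⟩ : ∃ k, (∀ j, j < k → upd x δ m one' j = y j) ∧
            upd x δ m one' k < y k := hl
        rcases lt_trichotomy k i with hk1 | rfl | hk3
        · rw [show upd x δ m one' k = x k by simp [upd, (hk1.trans hi1).trans_le h2]] at hklt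
          rw [hieq k hk1, show upd x γ c zero' k = x k by simp [upd, hk1.trans hi1]] at hklt
          exact lt_irrefl _ hklt
        · rw [show upd x δ m one' k = x k by simp [upd, hi1.trans_le h2]] at hklt
          exact absurd (hilt.trans hklt) (lt_irrefl _)
        · have h5 := hkeq i hk3
          rw [show upd x δ m one' i = x i by simp [upd, hi1.trans_le h2]] at h5
          rw [← h5] at hilt
          exact lt_irrefl _ hilt
      · rw [heq, show upd x γ c zero' γ = c by simp [upd]] at hilt
        exact absurd (hy'.trans hilt) (lt_irrefl _)
      · have h5 := hieq γ hi3
        rw [show upd x γ c zero' γ = c by simp [upd]] at h5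
        rw [h5] at hy'
        exact lt_irrefl _ hy'
    exact fun hmem => (closure_minimal hsub isOpen_Ioo.isClosed_compl hmem) hxW

/-- The set-valued map: `pmap z` is the intersection of the lex-closures of all
product-open neighborhoods of `z`. -/
def pmap (z : ι → II) : Set (Lex (ι → II)) :=
  ⋂ V ∈ {V : Set (ι → II) | IsOpen V ∧ z ∈ V}, closure (toLex '' V)

lemma mem_pmap_self (z : ι → II) : toLex z ∈ pmap z :=
  Set.mem_iInter₂.mpr fun _ hV => subset_closure ⟨z, hV.2, rfl⟩

lemma pmap_isClosed (z : ι → II) : IsClosed (pmap z) :=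
  isClosed_biInter fun _ _ => isClosed_closure

lemma pmap_isCompact (z : ι → II) : IsCompact (pmap z) :=
  (pmap_isClosed z).isCompact

/-- The countable set of candidate values. -/
def eset (z : ι → II) : Set (Lex (ι → II)) :=
  insert (toLex z)
    (Set.range fun q : ι × Bool => toLex fun β => if β < q.1 then z β else cond q.2 one' zero')

lemma eset_countable (z : ι → II) [Countable ι] : (eset z).Countable :=
  (Set.countable_range _).insert _

lemma pmap_subset_eset (z : ι → II) : pmap z ⊆ eset z := by
  intro a ha
  rcases lt_trichotomy (toLex z) a with hlt | heq | hgt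
  · obtain ⟨γ, hag, hγ⟩ : ∃ i, (∀ j, j < i → z j = ofLex a j) ∧ z i < ofLex a i := hlt
    by_cases h1 : ∀ δ, γ ≤ δ → ofLex a δ = one'
    · refine Set.mem_insert_iff.mpr (Or.inr ⟨(γ, true), ?_⟩)
      have : (fun β => if β < γ then z β else cond true one' zero') = ofLex a := by
        funext β
        by_cases hβ : β < γ
        · simp [hβ, hag β hβ]
        · simp [hβ, h1 β (not_lt.mp hβ)]
      show toLex (fun β => if β < γ then z β else cond true one' zero') = a
      rw [this]
      rfl
    · push_neg at h1
      obtain ⟨δ, hδ, hne⟩ := h1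
      obtain ⟨V, hVo, hzV, hnc⟩ :=
        sep_up z (ofLex a) γ δ hγ hδ (lt_of_le_of_ne (le_one' _) hne)
      exact absurd (Set.mem_iInter₂.mp ha V ⟨hVo, hzV⟩) hnc
  · exact Set.mem_insert_iff.mpr (Or.inl heq.symm)
  · obtain ⟨γ, hag, hγ⟩ : ∃ i, (∀ j, j < i → ofLex a j = z j) ∧ ofLex a i < z i := hgt
    by_cases h1 : ∀ δ, γ ≤ δ → ofLex a δ = zero'
    · refine Set.mem_insert_iff.mpr (Or.inr ⟨(γ, false), ?_⟩)
      have : (fun β => if β < γ then z β else cond false one' zero') = ofLex a := by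
        funext β
        by_cases hβ : β < γ
        · simp [hβ, (hag β hβ).symm]
        · simp [hβ, h1 β (not_lt.mp hβ)]
      show toLex (fun β => if β < γ then z β else cond false one' zero') = a
      rw [this]
      rfl
    · push_neg at h1
      obtain ⟨δ, hδ, hne⟩ := h1
      obtain ⟨V, hVo, hzV, hnc⟩ :=
        sep_down z (ofLex a) γ δ hγ hδ (lt_of_le_of_ne (zero'_le _) (Ne.symm hne))
      exact absurd (Set.mem_iInter₂.mp ha V ⟨hVo, hzV⟩) hnc

lemma pmap_usc {U : Set (Lex (ι → II))} (hU : IsOpen U) :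
    IsOpen {z : ι → II | pmap z ⊆ U} := by
  rw [isOpen_iff_forall_mem_open]
  intro z hz
  have hz' : pmap z ⊆ U := hz
  -- directed family of closed sets
  let J := {V : Set (ι → II) // IsOpen V ∧ z ∈ V}
  haveI : Nonempty J := ⟨⟨Set.univ, isOpen_univ, Set.mem_univ z⟩⟩
  let Z : J → Set (Lex (ι → II)) := fun V => closure (toLex '' V.1) ∩ Uᶜ
  have hZc : ∀ V : J, IsClosed (Z V) := fun V => isClosed_closure.inter hU.isClosed_compl
  have hZe : (Set.univ ∩ ⋂ V : J, Z V) = ∅ := by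
    rw [Set.univ_inter, Set.eq_empty_iff_forall_notMem]
    intro x hx
    have hx1 : x ∈ pmap z := Set.mem_iInter₂.mpr fun V hV =>
      (Set.mem_iInter.mp hx ⟨V, hV⟩).1
    exact (Set.mem_iInter.mp hx ⟨Set.univ, isOpen_univ, Set.mem_univ z⟩).2 (hz' hx1)
  have hdir : Directed (· ⊇ ·) Z := by
    intro V1 V2
    refine ⟨⟨V1.1 ∩ V2.1, V1.2.1.inter V2.2.1, V1.2.2, V2.2.2⟩, ?_, ?_⟩
    · exact Set.inter_subset_inter
        (closure_mono (Set.image_mono Set.inter_subset_left)) subset_rfl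
    · exact Set.inter_subset_inter
        (closure_mono (Set.image_mono Set.inter_subset_right)) subset_rfl
  obtain ⟨V, hV⟩ := isCompact_univ.elim_directed_family_closed Z hZc hZe hdir
  rw [Set.univ_inter] at hV
  have hVU : closure (toLex '' V.1) ⊆ U := by
    intro x hx
    by_contra hxU
    exact Set.eq_empty_iff_forall_notMem.mp hV x ⟨hx, hxU⟩
  refine ⟨V.1, ?_, V.2.1, V.2.2⟩
  intro z' hz'
  exact fun x hx => hVU (Set.mem_iInter₂.mp hx V.1 ⟨V.2.1, hz'⟩)

theorem lexPow_aux [Countable ι] : IsKLSigmaLeOmega (Lex (ι → II)) := by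
  obtain ⟨e, he⟩ := Countable.exists_injective_nat ι
  let q : (ℕ → II) → (ι → II) := fun g i => g (e i)
  have hqc : Continuous q := continuous_pi fun i => continuous_apply (e i)
  have hqs : Function.Surjective q := by
    intro h
    rcases isEmpty_or_nonempty ι with hemp | hne
    · exact ⟨fun _ => zero', funext fun i => hemp.elim i⟩
    · exact ⟨h ∘ Function.invFun e,
        funext fun i => congrArg h (Function.leftInverse_invFun he i)⟩
  refine ⟨ℕ → II, inferInstance, inferInstance, inferInstance, fun g => pmap (q g), ?_,
    fun g => pmap_isCompact _, fun U hU => ?_, fun g => ?_⟩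
  · refine Set.eq_univ_iff_forall.mpr fun a => Set.mem_iUnion.mpr ?_
    obtain ⟨g, hg⟩ := hqs (ofLex a)
    exact ⟨g, by rw [hg]; exact mem_pmap_self (ofLex a)⟩
  · have : {g : ℕ → II | pmap (q g) ⊆ U} = q ⁻¹' {z | pmap z ⊆ U} := rfl
    rw [this]
    exact (pmap_usc hU).preimage hqc
  · haveI : Countable (pmap (q g)) :=
      ((eset_countable (q g)).mono (pmap_subset_eset (q g))).to_subtype
    haveI : CompactSpace (pmap (q g)) := isCompact_iff_compactSpace.mp (pmap_isCompact _)
    exact metrizable_of_countable_compact_t2 _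

end Topology


/-- For every countable ordinal `λ`, the lexicographic power `[0,1]^λ_lex` — the set of
functions `λ → [0,1]` with the lexicographic (well-ordered first difference) order,
equipped with the order topology — is a `KLΣ(≤ω)`-space. -/
theorem lexPow_unitInterval_isKLSigmaLeOmega (lam : Ordinal)
    (hlam : lam.card ≤ Cardinal.aleph0) :
    letI : TopologicalSpace (Lex (lam.ToType → ↥(Set.Icc (0 : ℝ) 1))) :=
      Preorder.topology (Lex (lam.ToType → ↥(Set.Icc (0 : ℝ) 1)))
    IsKLSigmaLeOmega (Lex (lam.ToType → ↥(Set.Icc (0 : ℝ) 1))) := by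
  haveI : Countable lam.ToType := by
    rw [← Cardinal.mk_le_aleph0_iff, Cardinal.mk_toType]
    exact hlam
  exact lexPow_aux (ι := lam.ToType)
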